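/- Let Λ be an additive subgroup of ℂ³ stable under both the cyclic coordinate permutation σ(z₁, z₂, z₃) = (z₂, z₃, z₁) and the map τ(z₁, z₂, z₃) = (z₁, −z₂, −z₃). Let α = (α₁, α₂, α₃) ∈ ℂ³ and let a : ℂ³/Λ → ℂ³/Λ be the well-defined map a([z]) = [σ(z) + α]. If a ∘ a ∘ a is the identity of ℂ³/Λ, then the point P = [(0, α₂ + α₃, α₁ + α₂ + 2α₃)] satisfies a(a(P)) = P; in particular a ∘ a has a fixed point on ℂ³/Λ. -/
import Mathlib


/-- Computational core of Lemma (2.14): for a lattice `Λ ⊆ ℂ³` stable under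
the cyclic permutation `σ(z₁,z₂,z₃) = (z₂,z₃,z₁)` and under
`τ(z₁,z₂,z₃) = (z₁,−z₂,−z₃)`, if `a([z]) = [σ(z) + α]` satisfies `a³ = id` on
`ℂ³/Λ`, then `P = [(0, α₂+α₃, α₁+α₂+2α₃)]` is a fixed point of `a²`. -/
theorem stmt_9 (Λ : AddSubgroup (ℂ × ℂ × ℂ))
    (hσ : ∀ z ∈ Λ, ((z.2.1, z.2.2, z.1) : ℂ × ℂ × ℂ) ∈ Λ)
    (hτ : ∀ z ∈ Λ, ((z.1, -z.2.1, -z.2.2) : ℂ × ℂ × ℂ) ∈ Λ)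
    (α : ℂ × ℂ × ℂ)
    (a : (ℂ × ℂ × ℂ) ⧸ Λ → (ℂ × ℂ × ℂ) ⧸ Λ)
    (ha : ∀ z : ℂ × ℂ × ℂ,
      a (QuotientAddGroup.mk z) = QuotientAddGroup.mk ((z.2.1, z.2.2, z.1) + α))
    (ha3 : a ∘ a ∘ a = id) :
    a (a (QuotientAddGroup.mk
        ((0, α.2.1 + α.2.2, α.1 + α.2.1 + 2 * α.2.2) : ℂ × ℂ × ℂ))) =
      QuotientAddGroup.mk ((0, α.2.1 + α.2.2, α.1 + α.2.1 + 2 * α.2.2) : ℂ × ℂ × ℂ) ∧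
    ∃ Q : (ℂ × ℂ × ℂ) ⧸ Λ, a (a Q) = Q := by
  obtain ⟨α₁, α₂, α₃⟩ := α
  -- `a³ = id` applied to `[0]` gives `(S,S,S) ∈ Λ` with `S = α₁+α₂+α₃`.
  have h0 : a (a (a (QuotientAddGroup.mk (0 : ℂ × ℂ × ℂ)))) =
      QuotientAddGroup.mk (0 : ℂ × ℂ × ℂ) := congrFun ha3 _
  rw [ha, ha, ha, QuotientAddGroup.eq] at h0
  simp only [Prod.fst_zero, Prod.snd_zero, Prod.mk_add_mk, zero_add, neg_add_rev,
    Prod.neg_mk, add_zero] at h0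
  have hs : ((α₁ + α₂ + α₃, α₁ + α₂ + α₃, α₁ + α₂ + α₃) : ℂ × ℂ × ℂ) ∈ Λ := by
    convert Λ.neg_mem h0 using 1
    simp only [Prod.neg_mk, Prod.mk.injEq, neg_neg]
    refine ⟨by ring, by ring, by ring⟩
  -- `τ`-stability gives `(2S, 0, 0) ∈ Λ`.
  have hτs := hτ _ hs
  have h2s : ((2 * (α₁ + α₂ + α₃), 0, 0) : ℂ × ℂ × ℂ) ∈ Λ := by
    convert Λ.add_mem hs hτs using 1
    simp only [Prod.mk_add_mk, Prod.mk.injEq]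
    refine ⟨by ring, by ring, by ring⟩
  -- The point `P = (0, α₂+α₃, α₁+α₂+2α₃)` is fixed by `a²`.
  have key : a (a (QuotientAddGroup.mk
      ((0, α₂ + α₃, α₁ + α₂ + 2 * α₃) : ℂ × ℂ × ℂ))) =
      QuotientAddGroup.mk ((0, α₂ + α₃, α₁ + α₂ + 2 * α₃) : ℂ × ℂ × ℂ) := by
    rw [ha, ha, QuotientAddGroup.eq]
    simp only [Prod.mk_add_mk, neg_add_rev, Prod.neg_mk, Prod.fst_add, Prod.snd_add]
    convert Λ.neg_mem h2s using 1
    simp only [Prod.neg_mk, Prod.mk.injEq, neg_zero]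
    refine ⟨by ring, by ring, by ring⟩
  exact ⟨key, ⟨_, key⟩⟩
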